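/- Let k be a real number, let a > 0 and b > 0, and let v : ℝ × ℝ → ℂ be twice continuously differentiable on an open set containing the closed rectangle [0, a] × [0, b], satisfying Δv + k²·v = 0 on [0, a] × [0, b] (where Δv = ∂₁₁v + ∂₂₂v). Then the imaginary part of the boundary integral of (∂v/∂n)·conj(v) vanishes; explicitly, Im( ∫₀ᵇ ∂₁v(a, y)·conj(v(a, y)) dy − ∫₀ᵇ ∂₁v(0, y)·conj(v(0, y)) dy + ∫₀ᵃ ∂₂v(x, b)·conj(v(x, b)) dx − ∫₀ᵃ ∂₂v(x, 0)·conj(v(x, 0)) dx ) = 0. -/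

import Mathlib

open Complex

/-- First partial derivative of `v : ℝ × ℝ → ℂ` with respect to the first argument. -/
noncomputable def pd1 (v : ℝ × ℝ → ℂ) (p : ℝ × ℝ) : ℂ :=
  deriv (fun t => v (t, p.2)) p.1

/-- First partial derivative of `v : ℝ × ℝ → ℂ` with respect to the second argument. -/
noncomputable def pd2 (v : ℝ × ℝ → ℂ) (p : ℝ × ℝ) : ℂ :=
  deriv (fun t => v (p.1, t)) p.2

/-- Second partial derivative of `v` with respect to the first argument. -/
noncomputable def pd11 (v : ℝ × ℝ → ℂ) (p : ℝ × ℝ) : ℂ :=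
  deriv (fun t => pd1 v (t, p.2)) p.1

/-- Second partial derivative of `v` with respect to the second argument. -/
noncomputable def pd22 (v : ℝ × ℝ → ℂ) (p : ℝ × ℝ) : ℂ :=
  deriv (fun t => pd2 v (p.1, t)) p.2

open MeasureTheory intervalIntegral

private lemma hasDerivAt_line_fst {E : Type*} [NormedAddCommGroup E] [NormedSpace ℝ E]
    {f : ℝ × ℝ → E} {x y : ℝ} (hf : DifferentiableAt ℝ f (x, y)) :
    HasDerivAt (fun t => f (t, y)) (fderiv ℝ f (x, y) (1, 0)) x := by
  have hg : HasDerivAt (fun t : ℝ => ((t, y) : ℝ × ℝ)) (1, 0) x :=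
    (hasDerivAt_id x).prodMk (hasDerivAt_const x y)
  exact hf.hasFDerivAt.comp_hasDerivAt x hg

private lemma hasDerivAt_line_snd {E : Type*} [NormedAddCommGroup E] [NormedSpace ℝ E]
    {f : ℝ × ℝ → E} {x y : ℝ} (hf : DifferentiableAt ℝ f (x, y)) :
    HasDerivAt (fun t => f (x, t)) (fderiv ℝ f (x, y) (0, 1)) y := by
  have hg : HasDerivAt (fun t : ℝ => ((x, t) : ℝ × ℝ)) (0, 1) y :=
    (hasDerivAt_const y x).prodMk (hasDerivAt_id y)
  exact hf.hasFDerivAt.comp_hasDerivAt y hg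

private lemma intervalIntegral_conj (u : ℝ → ℂ) (c d : ℝ) :
    (starRingEnd ℂ) (∫ t in c..d, u t) = ∫ t in c..d, (starRingEnd ℂ) (u t) := by
  simp only [intervalIntegral.intervalIntegral_eq_integral_uIoc, starRingEnd_apply,
    star_smul, star_trivial]
  simp only [← starRingEnd_apply, integral_conj]

/-- **Identity (3.15)/(eq:norm1) on the rectangular canonical domain.** If `v` is
twice continuously differentiable on an open set containing `[0,a] × [0,b]` and
satisfies the Helmholtz equation `Δv + k² v = 0` there (`k` real), then the
imaginary part of the boundary integral of the outward normal derivative of `v`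
times the conjugate of `v` vanishes. -/
theorem helmholtz_boundary_integral_im_eq_zero (k a b : ℝ) (ha : 0 < a) (hb : 0 < b)
    (O : Set (ℝ × ℝ)) (hO : IsOpen O)
    (hsub : Set.Icc ((0 : ℝ), (0 : ℝ)) (a, b) ⊆ O)
    (v : ℝ × ℝ → ℂ) (hv : ContDiffOn ℝ 2 v O)
    (hPDE : ∀ p ∈ Set.Icc ((0 : ℝ), (0 : ℝ)) (a, b),
      pd11 v p + pd22 v p + (k : ℂ) ^ 2 * v p = 0) :
    ((∫ y in (0:ℝ)..b, pd1 v (a, y) * (starRingEnd ℂ) (v (a, y)))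
      - (∫ y in (0:ℝ)..b, pd1 v (0, y) * (starRingEnd ℂ) (v (0, y)))
      + (∫ x in (0:ℝ)..a, pd2 v (x, b) * (starRingEnd ℂ) (v (x, b)))
      - (∫ x in (0:ℝ)..a, pd2 v (x, 0) * (starRingEnd ℂ) (v (x, 0)))).im = 0 := by
  have hmem : ∀ {x y : ℝ}, x ∈ Set.Icc (0:ℝ) a → y ∈ Set.Icc (0:ℝ) b →
      ((x, y) : ℝ × ℝ) ∈ O :=
    fun hx hy => hsub (Set.mem_Icc.mpr ⟨⟨hx.1, hy.1⟩, ⟨hx.2, hy.2⟩⟩)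
  -- differentiability of `v` on `O`
  have hvd : ∀ p ∈ O, DifferentiableAt ℝ v p := fun p hp =>
    (hv.differentiableOn two_ne_zero).differentiableAt (hO.mem_nhds hp)
  -- the full derivative of `v` is C¹ on `O`
  have hfd : ContDiffOn ℝ 1 (fun p => fderiv ℝ v p) O :=
    hv.fderiv_of_isOpen hO (by norm_num)
  have hw1 : ContDiffOn ℝ 1 (fun p => fderiv ℝ v p (1, 0)) O :=
    hfd.clm_apply contDiffOn_const
  have hw2 : ContDiffOn ℝ 1 (fun p => fderiv ℝ v p (0, 1)) O :=
    hfd.clm_apply contDiffOn_const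
  have hw1d : ∀ p ∈ O, DifferentiableAt ℝ (fun q => fderiv ℝ v q (1, 0)) p := fun p hp =>
    (hw1.differentiableOn one_ne_zero).differentiableAt (hO.mem_nhds hp)
  have hw2d : ∀ p ∈ O, DifferentiableAt ℝ (fun q => fderiv ℝ v q (0, 1)) p := fun p hp =>
    (hw2.differentiableOn one_ne_zero).differentiableAt (hO.mem_nhds hp)
  -- identification of `pd1`, `pd2` with the full derivative
  have hpd1 : ∀ p ∈ O, pd1 v p = fderiv ℝ v p (1, 0) := by
    rintro ⟨x, y⟩ hp
    exact (hasDerivAt_line_fst (hvd _ hp)).deriv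
  have hpd2 : ∀ p ∈ O, pd2 v p = fderiv ℝ v p (0, 1) := by
    rintro ⟨x, y⟩ hp
    exact (hasDerivAt_line_snd (hvd _ hp)).deriv
  -- `v` has partial derivatives `pd1`, `pd2` along lines
  have hvline1 : ∀ x y : ℝ, ((x, y) : ℝ × ℝ) ∈ O →
      HasDerivAt (fun t => v (t, y)) (pd1 v (x, y)) x := by
    intro x y hp
    rw [hpd1 _ hp]
    exact hasDerivAt_line_fst (hvd _ hp)
  have hvline2 : ∀ x y : ℝ, ((x, y) : ℝ × ℝ) ∈ O →
      HasDerivAt (fun t => v (x, t)) (pd2 v (x, y)) y := by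
    intro x y hp
    rw [hpd2 _ hp]
    exact hasDerivAt_line_snd (hvd _ hp)
  -- derivatives of `pd1`, `pd2` along lines
  have key1 : ∀ x y : ℝ, ((x, y) : ℝ × ℝ) ∈ O →
      HasDerivAt (fun t => pd1 v (t, y))
        (fderiv ℝ (fun q => fderiv ℝ v q (1, 0)) (x, y) (1, 0)) x := by
    intro x y hp
    have h1 := hasDerivAt_line_fst (hw1d _ hp)
    apply h1.congr_of_eventuallyEq
    have hev : ∀ᶠ t in nhds x, ((t, y) : ℝ × ℝ) ∈ O :=
      (continuous_id.prodMk continuous_const).continuousAt.preimage_mem_nhds (hO.mem_nhds hp)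
    filter_upwards [hev] with t ht
    exact hpd1 _ ht
  have key2 : ∀ x y : ℝ, ((x, y) : ℝ × ℝ) ∈ O →
      HasDerivAt (fun t => pd2 v (x, t))
        (fderiv ℝ (fun q => fderiv ℝ v q (0, 1)) (x, y) (0, 1)) y := by
    intro x y hp
    have h1 := hasDerivAt_line_snd (hw2d _ hp)
    apply h1.congr_of_eventuallyEq
    have hev : ∀ᶠ t in nhds y, ((x, t) : ℝ × ℝ) ∈ O :=
      (continuous_const.prodMk continuous_id).continuousAt.preimage_mem_nhds (hO.mem_nhds hp)
    filter_upwards [hev] with t ht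
    exact hpd2 _ ht
  have hpd11 : ∀ p ∈ O, pd11 v p = fderiv ℝ (fun q => fderiv ℝ v q (1, 0)) p (1, 0) := by
    rintro ⟨x, y⟩ hp
    exact (key1 x y hp).deriv
  have hpd22 : ∀ p ∈ O, pd22 v p = fderiv ℝ (fun q => fderiv ℝ v q (0, 1)) p (0, 1) := by
    rintro ⟨x, y⟩ hp
    exact (key2 x y hp).deriv
  have key1' : ∀ x y : ℝ, ((x, y) : ℝ × ℝ) ∈ O →
      HasDerivAt (fun t => pd1 v (t, y)) (pd11 v (x, y)) x := by
    intro x y hp; rw [hpd11 _ hp]; exact key1 x y hp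
  have key2' : ∀ x y : ℝ, ((x, y) : ℝ × ℝ) ∈ O →
      HasDerivAt (fun t => pd2 v (x, t)) (pd22 v (x, y)) y := by
    intro x y hp; rw [hpd22 _ hp]; exact key2 x y hp
  -- continuity of all the players on `O`
  have hvc : ContinuousOn v O := hv.continuousOn
  have hpd1c : ContinuousOn (pd1 v) O := hw1.continuousOn.congr hpd1
  have hpd2c : ContinuousOn (pd2 v) O := hw2.continuousOn.congr hpd2
  have hpd11c : ContinuousOn (pd11 v) O := by
    have h2 := (hw1.continuousOn_fderiv_of_isOpen hO le_rfl).clm_apply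
      (continuousOn_const (c := ((1:ℝ), (0:ℝ))))
    exact h2.congr hpd11
  have hpd22c : ContinuousOn (pd22 v) O := by
    have h2 := (hw2.continuousOn_fderiv_of_isOpen hO le_rfl).clm_apply
      (continuousOn_const (c := ((0:ℝ), (1:ℝ))))
    exact h2.congr hpd22
  -- the two divergence integrands
  set G1 : ℝ × ℝ → ℂ := fun p => pd11 v p * star (v p) + pd1 v p * star (pd1 v p) with hG1def
  set G2 : ℝ × ℝ → ℂ := fun p => pd22 v p * star (v p) + pd2 v p * star (pd2 v p) with hG2def
  have hG1c : ContinuousOn G1 O := (hpd11c.mul hvc.star).add (hpd1c.mul hpd1c.star)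
  have hG2c : ContinuousOn G2 O := (hpd22c.mul hvc.star).add (hpd2c.mul hpd2c.star)
  have hprodsub : Set.Icc (0:ℝ) a ×ˢ Set.Icc (0:ℝ) b ⊆ O := by
    rintro ⟨x, y⟩ ⟨hx, hy⟩; exact hmem hx hy
  -- continuity along lines
  have hlineH : ∀ (g : ℝ × ℝ → ℂ), ContinuousOn g O → ∀ y ∈ Set.Icc (0:ℝ) b,
      ContinuousOn (fun x => g (x, y)) (Set.Icc (0:ℝ) a) := fun g hg y hy =>
    hg.comp ((continuous_id.prodMk continuous_const).continuousOn)
      (fun x hx => hmem hx hy)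
  have hlineV : ∀ (g : ℝ × ℝ → ℂ), ContinuousOn g O → ∀ x ∈ Set.Icc (0:ℝ) a,
      ContinuousOn (fun y => g (x, y)) (Set.Icc (0:ℝ) b) := fun g hg x hx =>
    hg.comp ((continuous_const.prodMk continuous_id).continuousOn)
      (fun y hy => hmem hx hy)
  -- derivative of the horizontal flux along horizontal lines
  have hf1d : ∀ x y : ℝ, ((x, y) : ℝ × ℝ) ∈ O →
      HasDerivAt (fun t => pd1 v (t, y) * star (v (t, y))) (G1 (x, y)) x := by
    intro x y hp
    exact (key1' x y hp).mul ((hvline1 x y hp).star)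
  have hf2d : ∀ x y : ℝ, ((x, y) : ℝ × ℝ) ∈ O →
      HasDerivAt (fun t => pd2 v (x, t) * star (v (x, t))) (G2 (x, y)) y := by
    intro x y hp
    exact (key2' x y hp).mul ((hvline2 x y hp).star)
  -- FTC on horizontal slices
  have hslice1 : ∀ y ∈ Set.Icc (0:ℝ) b,
      (∫ x in (0:ℝ)..a, G1 (x, y))
        = pd1 v (a, y) * star (v (a, y)) - pd1 v (0, y) * star (v (0, y)) := by
    intro y hy
    apply intervalIntegral.integral_eq_sub_of_hasDerivAt
    · intro x hx
      rw [Set.uIcc_of_le ha.le] at hx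
      exact hf1d x y (hmem hx hy)
    · apply ContinuousOn.intervalIntegrable
      rw [Set.uIcc_of_le ha.le]
      exact hlineH G1 hG1c y hy
  have hslice2 : ∀ x ∈ Set.Icc (0:ℝ) a,
      (∫ y in (0:ℝ)..b, G2 (x, y))
        = pd2 v (x, b) * star (v (x, b)) - pd2 v (x, 0) * star (v (x, 0)) := by
    intro x hx
    apply intervalIntegral.integral_eq_sub_of_hasDerivAt
    · intro y hy
      rw [Set.uIcc_of_le hb.le] at hy
      exact hf2d x y (hmem hx hy)
    · apply ContinuousOn.intervalIntegrable
      rw [Set.uIcc_of_le hb.le]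
      exact hlineV G2 hG2c x hx
  -- integrability of boundary traces
  have hbd1a : IntervalIntegrable (fun y => pd1 v (a, y) * star (v (a, y))) volume 0 b := by
    apply ContinuousOn.intervalIntegrable
    rw [Set.uIcc_of_le hb.le]
    exact hlineV _ (hpd1c.mul hvc.star) a ⟨ha.le, le_refl a⟩
  have hbd10 : IntervalIntegrable (fun y => pd1 v (0, y) * star (v (0, y))) volume 0 b := by
    apply ContinuousOn.intervalIntegrable
    rw [Set.uIcc_of_le hb.le]
    exact hlineV _ (hpd1c.mul hvc.star) 0 ⟨le_refl 0, ha.le⟩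
  -- horizontal part as a double integral
  have hB1 : (∫ y in (0:ℝ)..b, pd1 v (a, y) * star (v (a, y)))
      - (∫ y in (0:ℝ)..b, pd1 v (0, y) * star (v (0, y)))
      = ∫ y in (0:ℝ)..b, ∫ x in (0:ℝ)..a, G1 (x, y) := by
    rw [← intervalIntegral.integral_sub hbd1a hbd10]
    apply intervalIntegral.integral_congr
    intro y hy
    rw [Set.uIcc_of_le hb.le] at hy
    exact (hslice1 y hy).symm
  -- vertical part as a double integral
  have hbd2b : IntervalIntegrable (fun x => pd2 v (x, b) * star (v (x, b))) volume 0 a := by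
    apply ContinuousOn.intervalIntegrable
    rw [Set.uIcc_of_le ha.le]
    exact hlineH _ (hpd2c.mul hvc.star) b ⟨hb.le, le_refl b⟩
  have hbd20 : IntervalIntegrable (fun x => pd2 v (x, 0) * star (v (x, 0))) volume 0 a := by
    apply ContinuousOn.intervalIntegrable
    rw [Set.uIcc_of_le ha.le]
    exact hlineH _ (hpd2c.mul hvc.star) 0 ⟨le_refl 0, hb.le⟩
  have hB2 : (∫ x in (0:ℝ)..a, pd2 v (x, b) * star (v (x, b)))
      - (∫ x in (0:ℝ)..a, pd2 v (x, 0) * star (v (x, 0)))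
      = ∫ x in (0:ℝ)..a, ∫ y in (0:ℝ)..b, G2 (x, y) := by
    rw [← intervalIntegral.integral_sub hbd2b hbd20]
    apply intervalIntegral.integral_congr
    intro x hx
    rw [Set.uIcc_of_le ha.le] at hx
    exact (hslice2 x hx).symm
  -- integrability of G1, G2 on the product of the restricted measures
  have hIntG1 : Integrable G1
      ((volume.restrict (Set.Ioc (0:ℝ) a)).prod (volume.restrict (Set.Ioc (0:ℝ) b))) := by
    rw [Measure.prod_restrict]
    exact ((hG1c.mono hprodsub).integrableOn_compact
      (isCompact_Icc.prod isCompact_Icc)).mono_set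
      (Set.prod_mono Set.Ioc_subset_Icc_self Set.Ioc_subset_Icc_self)
  have hIntG2 : Integrable G2
      ((volume.restrict (Set.Ioc (0:ℝ) a)).prod (volume.restrict (Set.Ioc (0:ℝ) b))) := by
    rw [Measure.prod_restrict]
    exact ((hG2c.mono hprodsub).integrableOn_compact
      (isCompact_Icc.prod isCompact_Icc)).mono_set
      (Set.prod_mono Set.Ioc_subset_Icc_self Set.Ioc_subset_Icc_self)
  -- swap the order of integration in the G1 double integral
  have hswap1 : (∫ y in (0:ℝ)..b, ∫ x in (0:ℝ)..a, G1 (x, y))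
      = ∫ x in (0:ℝ)..a, ∫ y in (0:ℝ)..b, G1 (x, y) := by
    simp_rw [intervalIntegral.integral_of_le ha.le, intervalIntegral.integral_of_le hb.le]
    exact (MeasureTheory.integral_integral_swap (f := fun x y => G1 (x, y)) hIntG1).symm
  -- outer integrability (for adding the two double integrals)
  have hout1 : IntervalIntegrable (fun x => ∫ y in (0:ℝ)..b, G1 (x, y)) volume 0 a := by
    rw [intervalIntegrable_iff_integrableOn_Ioc_of_le ha.le]
    simp_rw [intervalIntegral.integral_of_le hb.le]
    exact hIntG1.integral_prod_left
  have hout2 : IntervalIntegrable (fun x => ∫ y in (0:ℝ)..b, G2 (x, y)) volume 0 a := by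
    rw [intervalIntegrable_iff_integrableOn_Ioc_of_le ha.le]
    simp_rw [intervalIntegral.integral_of_le hb.le]
    exact hIntG2.integral_prod_left
  -- add the two double integrals
  have hAdd : (∫ x in (0:ℝ)..a, ∫ y in (0:ℝ)..b, G1 (x, y))
      + (∫ x in (0:ℝ)..a, ∫ y in (0:ℝ)..b, G2 (x, y))
      = ∫ x in (0:ℝ)..a, ∫ y in (0:ℝ)..b, (G1 (x, y) + G2 (x, y)) := by
    rw [← intervalIntegral.integral_add hout1 hout2]
    apply intervalIntegral.integral_congr
    intro x hx
    rw [Set.uIcc_of_le ha.le] at hx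
    have h1 : IntervalIntegrable (fun y => G1 (x, y)) volume 0 b := by
      apply ContinuousOn.intervalIntegrable
      rw [Set.uIcc_of_le hb.le]
      exact hlineV G1 hG1c x hx
    have h2 : IntervalIntegrable (fun y => G2 (x, y)) volume 0 b := by
      apply ContinuousOn.intervalIntegrable
      rw [Set.uIcc_of_le hb.le]
      exact hlineV G2 hG2c x hx
    exact (intervalIntegral.integral_add h1 h2).symm
  -- the combined double integral is conjugation-invariant
  set T : ℂ := ∫ x in (0:ℝ)..a, ∫ y in (0:ℝ)..b, (G1 (x, y) + G2 (x, y)) with hTdef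
  have hpt : ∀ x ∈ Set.Icc (0:ℝ) a, ∀ y ∈ Set.Icc (0:ℝ) b,
      (starRingEnd ℂ) (G1 (x, y) + G2 (x, y)) = G1 (x, y) + G2 (x, y) := by
    intro x hx y hy
    have hp : ((x, y) : ℝ × ℝ) ∈ Set.Icc ((0:ℝ), (0:ℝ)) (a, b) :=
      Set.mem_Icc.mpr ⟨⟨hx.1, hy.1⟩, ⟨hx.2, hy.2⟩⟩
    have hpde := hPDE _ hp
    have hexp : G1 (x, y) + G2 (x, y)
        = -((k:ℂ)^2) * (v (x, y) * star (v (x, y)))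
          + pd1 v (x, y) * star (pd1 v (x, y))
          + pd2 v (x, y) * star (pd2 v (x, y)) := by
      show (pd11 v (x, y) * star (v (x, y)) + pd1 v (x, y) * star (pd1 v (x, y)))
          + (pd22 v (x, y) * star (v (x, y)) + pd2 v (x, y) * star (pd2 v (x, y)))
        = -((k:ℂ)^2) * (v (x, y) * star (v (x, y)))
          + pd1 v (x, y) * star (pd1 v (x, y))
          + pd2 v (x, y) * star (pd2 v (x, y))
      linear_combination star (v (x, y)) * hpde
    rw [hexp]
    simp only [Complex.star_def, Complex.mul_conj, map_add, map_mul, map_neg, map_pow,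
      Complex.conj_ofReal]
  have hconjT : (starRingEnd ℂ) T = T := by
    rw [hTdef, intervalIntegral_conj]
    refine intervalIntegral.integral_congr fun x hx => ?_
    rw [Set.uIcc_of_le ha.le] at hx
    exact (intervalIntegral_conj _ 0 b).trans
      (intervalIntegral.integral_congr fun y hy =>
        hpt x hx y (by rwa [Set.uIcc_of_le hb.le] at hy))
  -- assemble
  have hmain : ((∫ y in (0:ℝ)..b, pd1 v (a, y) * (starRingEnd ℂ) (v (a, y)))
      - (∫ y in (0:ℝ)..b, pd1 v (0, y) * (starRingEnd ℂ) (v (0, y)))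
      + (∫ x in (0:ℝ)..a, pd2 v (x, b) * (starRingEnd ℂ) (v (x, b)))
      - (∫ x in (0:ℝ)..a, pd2 v (x, 0) * (starRingEnd ℂ) (v (x, 0)))) = T := by
    simp only [starRingEnd_apply]
    calc (∫ y in (0:ℝ)..b, pd1 v (a, y) * star (v (a, y)))
          - (∫ y in (0:ℝ)..b, pd1 v (0, y) * star (v (0, y)))
          + (∫ x in (0:ℝ)..a, pd2 v (x, b) * star (v (x, b)))
          - (∫ x in (0:ℝ)..a, pd2 v (x, 0) * star (v (x, 0)))
        = ((∫ y in (0:ℝ)..b, pd1 v (a, y) * star (v (a, y)))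
            - (∫ y in (0:ℝ)..b, pd1 v (0, y) * star (v (0, y))))
          + ((∫ x in (0:ℝ)..a, pd2 v (x, b) * star (v (x, b)))
            - (∫ x in (0:ℝ)..a, pd2 v (x, 0) * star (v (x, 0)))) := by ring
      _ = (∫ y in (0:ℝ)..b, ∫ x in (0:ℝ)..a, G1 (x, y))
          + (∫ x in (0:ℝ)..a, ∫ y in (0:ℝ)..b, G2 (x, y)) := by rw [hB1, hB2]
      _ = (∫ x in (0:ℝ)..a, ∫ y in (0:ℝ)..b, G1 (x, y))
          + (∫ x in (0:ℝ)..a, ∫ y in (0:ℝ)..b, G2 (x, y)) := by rw [hswap1]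
      _ = T := hAdd
  rw [hmain]
  exact Complex.conj_eq_iff_im.mp hconjT
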